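/- If {A_n} are non-trivial i.i.d. complex random variables with E[log⁺|A_0|] < ∞, then almost surely limsup_{n→∞} (max_{0≤k≤n} |A_k|)^{1/n} = 1. -/

import Mathlib

open MeasureTheory ProbabilityTheory Filter

lemma aux_tsum {Ω : Type*} [MeasurableSpace Ω] (μ : Measure Ω) [IsProbabilityMeasure μ]
    {X : Ω → ℝ} (hint : Integrable X μ) (hnonneg : 0 ≤ X) :
    (∑' j : ℕ, μ {ω | X ω ∈ Set.Ioi (j : ℝ)}) < ⊤ := by
  letI : MeasureSpace Ω := ⟨μ⟩
  haveI : IsProbabilityMeasure (ℙ : Measure Ω) := ‹IsProbabilityMeasure μ›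
  exact ProbabilityTheory.tsum_prob_mem_Ioi_lt_top hint hnonneg

lemma aux_tendsto (x : ENNReal) (hx : x ≠ 0) (hx' : x ≠ ⊤) :
    Tendsto (fun n : ℕ => x ^ (1 / (n : ℝ))) atTop (nhds 1) := by
  have hxt : 0 < x.toReal := ENNReal.toReal_pos hx hx'
  have hre : Tendsto (fun n : ℕ => x.toReal ^ (1 / (n : ℝ))) atTop (nhds 1) := by
    have h0 : Tendsto (fun n : ℕ => Real.log x.toReal * (1 / (n : ℝ))) atTop (nhds 0) := by
      simpa using (tendsto_one_div_atTop_nhds_zero_nat).const_mul (Real.log x.toReal)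
    have := (Real.continuous_exp.tendsto 0).comp h0
    simp only [Real.exp_zero] at this
    refine this.congr fun n => ?_
    simp only [Function.comp_apply]
    rw [Real.rpow_def_of_pos hxt]
  have := (ENNReal.continuous_ofReal.tendsto 1).comp hre
  simp only [ENNReal.ofReal_one] at this
  refine this.congr fun n => ?_
  simp only [Function.comp_apply]
  rw [← ENNReal.ofReal_rpow_of_pos hxt, ENNReal.ofReal_toReal hx']

lemma aux_le_exp (x : ℝ) (_hx : 0 ≤ x) : x ≤ Real.exp (max (Real.log x) 0) := by
  rcases le_or_gt x 1 with h | h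
  · calc x ≤ 1 := h
    _ = Real.exp 0 := Real.exp_zero.symm
    _ ≤ _ := Real.exp_le_exp.2 (le_max_right _ _)
  · calc x = Real.exp (Real.log x) := (Real.exp_log (by linarith)).symm
    _ ≤ _ := Real.exp_le_exp.2 (le_max_left _ _)

/-- If `{A n}` are non-trivial i.i.d. complex random variables with `E[log⁺ |A 0|] < ∞`, then
almost surely `limsup (max_{0 ≤ k ≤ n} |A k|) ^ (1/n) = 1`. -/
theorem stmt3 {Ω : Type*} [MeasurableSpace Ω] (μ : Measure Ω) [IsProbabilityMeasure μ]
    (A : ℕ → Ω → ℂ) (hmeas : ∀ n, Measurable (A n))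
    (hindep : iIndepFun A μ)
    (hident : ∀ n, IdentDistrib (A n) (A 0) μ μ)
    (hnontriv : μ {ω | A 0 ω = 0} < 1)
    (hint : Integrable (fun ω => max (Real.log (‖A 0 ω‖)) 0) μ) :
    ∀ᵐ ω ∂μ,
      Filter.limsup
        (fun n : ℕ =>
          ((Finset.range (n + 1)).sup (fun k => ENNReal.ofReal (‖A k ω‖)))
            ^ (1 / (n : ℝ)))
        atTop = 1 := by
  classical
  have habs : Measurable fun z : ℂ => ‖z‖ := continuous_norm.measurable
  -- existence of a positive threshold seen with positive probability
  obtain ⟨c, hc0, hc⟩ : ∃ c : ℝ, 0 < c ∧ 0 < μ {ω | c < ‖A 0 ω‖} := by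
    by_contra h
    push_neg at h
    have hnull : ∀ c : ℝ, 0 < c → μ {ω | c < ‖A 0 ω‖} = 0 :=
      fun c hc => le_antisymm (h c hc) zero_le
    have hU : {ω | A 0 ω ≠ 0} ⊆ ⋃ m : ℕ, {ω | 1 / ((m : ℝ) + 1) < ‖A 0 ω‖} := by
      intro ω hω
      obtain ⟨m, hm⟩ := exists_nat_one_div_lt (norm_pos_iff.2 hω)
      exact Set.mem_iUnion.2 ⟨m, hm⟩
    have h0 : μ {ω | A 0 ω ≠ 0} = 0 :=
      measure_mono_null hU (measure_iUnion_null fun m => hnull _ (by positivity))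
    have hms : MeasurableSet {ω | A 0 ω = 0} := (hmeas 0) (measurableSet_singleton 0)
    have hcompl : μ {ω | A 0 ω = 0}ᶜ = 1 - μ {ω | A 0 ω = 0} := prob_compl_eq_one_sub hms
    have : μ {ω | A 0 ω = 0}ᶜ = 0 := by
      rw [Set.compl_setOf]; exact h0
    rw [hcompl] at this
    have h1le : (1 : ENNReal) ≤ μ {ω | A 0 ω = 0} := tsub_eq_zero_iff_le.mp this
    exact absurd h1le (not_le.2 hnontriv)
  -- the bad event where all |A k| ≤ c has measure zero
  set S : Set ℂ := {z | ‖z‖ ≤ c} with hS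
  have hSm : MeasurableSet S := measurableSet_le habs measurable_const
  have hq1 : μ (A 0 ⁻¹' S) < 1 := by
    by_contra hle
    have hq : μ (A 0 ⁻¹' S) = 1 := le_antisymm prob_le_one (not_lt.1 hle)
    have : μ (A 0 ⁻¹' S)ᶜ = 0 := by
      rw [prob_compl_eq_one_sub ((hmeas 0) hSm), hq, tsub_self]
    have heq : (A 0 ⁻¹' S)ᶜ = {ω | c < ‖A 0 ω‖} := by
      ext ω; simp [hS, Set.mem_compl_iff, not_le]
    rw [heq] at this
    exact absurd this (ne_of_gt hc)
  have hlow : μ {ω | ∀ k, ‖A k ω‖ ≤ c} = 0 := by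
    have hqn : ∀ n : ℕ, μ {ω | ∀ k, ‖A k ω‖ ≤ c} ≤ μ (A 0 ⁻¹' S) ^ n := by
      intro n
      have hsub : {ω | ∀ k, ‖A k ω‖ ≤ c} ⊆ ⋂ i ∈ Finset.range n, A i ⁻¹' S := by
        intro ω hω
        simp only [Set.mem_iInter]
        exact fun i _ => hω i
      have hprod := hindep.measure_inter_preimage_eq_mul (Finset.range n)
        (sets := fun _ => S) (fun i _ => hSm)
      calc μ {ω | ∀ k, ‖A k ω‖ ≤ c}
          ≤ μ (⋂ i ∈ Finset.range n, A i ⁻¹' S) := measure_mono hsub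
        _ = ∏ i ∈ Finset.range n, μ (A i ⁻¹' S) := hprod
        _ = μ (A 0 ⁻¹' S) ^ n := by
            rw [Finset.prod_congr rfl fun i _ => (hident i).measure_mem_eq hSm,
              Finset.prod_const, Finset.card_range]
    have hq0 : Tendsto (fun n : ℕ => μ (A 0 ⁻¹' S) ^ n) atTop (nhds 0) :=
      ENNReal.tendsto_pow_atTop_nhds_zero_of_lt_one hq1
    exact le_antisymm (ge_of_tendsto' hq0 hqn) zero_le
  -- Borel-Cantelli upper bound
  have hBC : ∀ m : ℕ, ∀ᵐ ω ∂μ, ∀ᶠ n : ℕ in atTop,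
      ((m : ℝ) + 1) * max (Real.log (‖A n ω‖)) 0 ≤ (n : ℝ) := by
    intro m
    set g : ℂ → ℝ := fun z => ((m : ℝ) + 1) * max (Real.log (‖z‖)) 0 with hg
    have hgm : Measurable g :=
      measurable_const.mul ((Real.measurable_log.comp habs).max measurable_const)
    have hsum : (∑' n : ℕ, μ {ω | (n : ℝ) < g (A n ω)}) ≠ ⊤ := by
      have heach : ∀ n : ℕ, μ {ω | (n : ℝ) < g (A n ω)}
          = μ {ω | g (A 0 ω) ∈ Set.Ioi ((n : ℕ) : ℝ)} := by
        intro n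
        have := ((hident n).comp hgm).measure_mem_eq (measurableSet_Ioi (a := (n : ℝ)))
        simpa [Set.preimage, Set.mem_Ioi] using this
      rw [tsum_congr heach]
      refine (aux_tsum μ (hint.const_mul ((m : ℝ) + 1)) fun ω => ?_).ne
      exact mul_nonneg (by positivity) (le_max_right _ _)
    filter_upwards [ae_eventually_notMem hsum] with ω hω
    filter_upwards [hω] with n hn
    simpa [not_lt, hg] using hn
  have hlow_ae : ∀ᵐ ω ∂μ, ∃ k, c < ‖A k ω‖ := by
    rw [ae_iff]
    convert hlow using 2
    ext ω
    simp [not_exists, not_lt]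
  filter_upwards [hlow_ae, ae_all_iff.2 hBC] with ω hlo hup
  set M : ℕ → ENNReal :=
    fun n => (Finset.range (n + 1)).sup (fun k => ENNReal.ofReal (‖A k ω‖)) with hM
  refine le_antisymm ?_ ?_
  · -- upper bound: limsup ≤ 1
    have key : ∀ m : ℕ, limsup (fun n : ℕ => M n ^ (1 / (n : ℝ))) atTop
        ≤ ENNReal.ofReal (Real.exp (1 / ((m : ℝ) + 1))) := by
      intro m
      obtain ⟨n0, hn0⟩ := eventually_atTop.1 (hup m)
      set b := ENNReal.ofReal (Real.exp (1 / ((m : ℝ) + 1))) with hb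
      have hb1 : 1 < b := by
        rw [hb, show (1 : ENNReal) = ENNReal.ofReal 1 from ENNReal.ofReal_one.symm]
        exact (ENNReal.ofReal_lt_ofReal_iff (Real.exp_pos _)).2
          (Real.one_lt_exp_iff.2 (by positivity))
      set D := M n0 with hD
      have hDtop : D ≠ ⊤ := by
        refine ne_of_lt ((Finset.sup_lt_iff ?_).2 fun k _ => ENNReal.ofReal_lt_top)
        exact lt_of_lt_of_le zero_lt_one le_top
      have hbound : ∀ᶠ n : ℕ in atTop, M n ^ (1 / (n : ℝ)) ≤ max (D ^ (1 / (n : ℝ))) b := by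
        filter_upwards [eventually_ge_atTop n0, eventually_ge_atTop 1] with n hn hn1
        have hMn : M n ≤ max D (ENNReal.ofReal (Real.exp ((n : ℝ) / ((m : ℝ) + 1)))) := by
          refine Finset.sup_le fun k hk => ?_
          rcases le_or_gt k n0 with hk0 | hk0
          · exact le_max_of_le_left (by
              rw [hD, hM]
              exact Finset.le_sup (f := fun k => ENNReal.ofReal (‖A k ω‖))
                (Finset.mem_range.2 (Nat.lt_succ_of_le hk0)))
          · refine le_max_of_le_right (ENNReal.ofReal_le_ofReal ?_)
            have h1 : ‖A k ω‖ ≤ Real.exp (max (Real.log (‖A k ω‖)) 0) :=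
              aux_le_exp _ (norm_nonneg _)
            have h2 : ((m : ℝ) + 1) * max (Real.log (‖A k ω‖)) 0 ≤ (k : ℝ) :=
              hn0 k hk0.le
            have h3 : max (Real.log (‖A k ω‖)) 0 ≤ (k : ℝ) / ((m : ℝ) + 1) := by
              rw [le_div_iff₀ (by positivity)]
              linarith
            have hkn : (k : ℝ) ≤ (n : ℝ) := by
              have := Finset.mem_range.1 hk
              exact_mod_cast (by omega : k ≤ n)
            have h4 : (k : ℝ) / ((m : ℝ) + 1) ≤ (n : ℝ) / ((m : ℝ) + 1) := by gcongr
            exact h1.trans (Real.exp_le_exp.2 (h3.trans h4))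
        have hexp : (0 : ℝ) ≤ 1 / (n : ℝ) := by positivity
        have hrpow : M n ^ (1 / (n : ℝ)) ≤
            max (D ^ (1 / (n : ℝ)))
              (ENNReal.ofReal (Real.exp ((n : ℝ) / ((m : ℝ) + 1))) ^ (1 / (n : ℝ))) := by
          rcases le_total D (ENNReal.ofReal (Real.exp ((n : ℝ) / ((m : ℝ) + 1)))) with h | h
          · exact le_max_of_le_right
              (ENNReal.rpow_le_rpow (hMn.trans_eq (max_eq_right h)) hexp)
          · exact le_max_of_le_left
              (ENNReal.rpow_le_rpow (hMn.trans_eq (max_eq_left h)) hexp)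
        refine hrpow.trans (max_le_max le_rfl (le_of_eq ?_))
        have hnne : (n : ℝ) ≠ 0 := by
          have : (1 : ℝ) ≤ (n : ℝ) := by exact_mod_cast hn1
          linarith
        have harg : (n : ℝ) / ((m : ℝ) + 1) * (1 / (n : ℝ)) = 1 / ((m : ℝ) + 1) := by
          field_simp
        rw [ENNReal.ofReal_rpow_of_pos (Real.exp_pos _),
          Real.rpow_def_of_pos (Real.exp_pos _), Real.log_exp, harg, hb]
      have hDb : ∀ᶠ n : ℕ in atTop, D ^ (1 / (n : ℝ)) ≤ b := by
        rcases eq_or_ne D 0 with hD0 | hD0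
        · filter_upwards [eventually_ge_atTop 1] with n hn
          have hnp : (0 : ℝ) < 1 / (n : ℝ) := by
            have : (1 : ℝ) ≤ (n : ℝ) := by exact_mod_cast hn
            positivity
          rw [hD0, ENNReal.zero_rpow_of_pos hnp]
          exact zero_le
        · exact ((aux_tendsto D hD0 hDtop).eventually_lt_const hb1).mono fun n h => h.le
      have hfinal : ∀ᶠ n : ℕ in atTop, M n ^ (1 / (n : ℝ)) ≤ b := by
        filter_upwards [hbound, hDb] with n h1 h2
        exact h1.trans (max_le h2 le_rfl)
      exact limsup_le_of_le (by isBoundedDefault) hfinal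
    have htend : Tendsto (fun m : ℕ => ENNReal.ofReal (Real.exp (1 / ((m : ℝ) + 1)))) atTop
        (nhds 1) := by
      have h0 : Tendsto (fun m : ℕ => 1 / ((m : ℝ) + 1)) atTop (nhds 0) :=
        tendsto_one_div_add_atTop_nhds_zero_nat
      have := (ENNReal.continuous_ofReal.tendsto _).comp ((Real.continuous_exp.tendsto 0).comp h0)
      simpa [Real.exp_zero, Function.comp_def] using this
    exact ge_of_tendsto' htend key
  · -- lower bound: 1 ≤ limsup
    obtain ⟨k0, hk0⟩ := hlo
    have hev : ∀ᶠ n : ℕ in atTop,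
        ENNReal.ofReal c ^ (1 / (n : ℝ)) ≤ M n ^ (1 / (n : ℝ)) := by
      filter_upwards [eventually_ge_atTop k0] with n hn
      refine ENNReal.rpow_le_rpow ?_ (by positivity)
      calc ENNReal.ofReal c ≤ ENNReal.ofReal (‖A k0 ω‖) :=
            ENNReal.ofReal_le_ofReal hk0.le
        _ ≤ M n := by
            rw [hM]
            exact Finset.le_sup (f := fun k => ENNReal.ofReal (‖A k ω‖))
              (Finset.mem_range.2 (Nat.lt_succ_of_le hn))
    calc (1 : ENNReal)
        = limsup (fun n : ℕ => ENNReal.ofReal c ^ (1 / (n : ℝ))) atTop :=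
          ((aux_tendsto _ (ne_of_gt (ENNReal.ofReal_pos.2 hc0)) ENNReal.ofReal_ne_top).limsup_eq).symm
      _ ≤ _ := limsup_le_limsup hev
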